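/- Let C = [−1/2, 1/2]ⁿ and let (F_k) be a sequence of measurable subsets of C with Σ_k vol(F_k) = ∞. Then there exist translation vectors (x_k) such that vol(C \ ⋃_k (F_k + x_k)) = 0; in particular, the key inductive step holds: for any measurable E ⊆ C and measurable F ⊆ C, there exists x ∈ 2C with vol((F + x) ∩ E) ≥ 2^{−n} · vol(F) · vol(E). -/

import Mathlib

open MeasureTheory Pointwise

section aux

variable {n : ℕ}

private lemma groemer_key_meas (G E : Set (EuclideanSpace ℝ (Fin n)))
    (hG : MeasurableSet G) (hE : MeasurableSet E) :
    Measurable (fun x : EuclideanSpace ℝ (Fin n) => volume ((x +ᵥ G) ∩ E)) := by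
  have hs : MeasurableSet {p : EuclideanSpace ℝ (Fin n) × EuclideanSpace ℝ (Fin n) |
      p.2 - p.1 ∈ G ∧ p.2 ∈ E} :=
    ((measurable_snd.sub measurable_fst) hG).inter (measurable_snd hE)
  have h := measurable_measure_prodMk_left (ν := (volume : Measure (EuclideanSpace ℝ (Fin n)))) hs
  convert h using 1
  funext x
  congr 1
  ext y
  simp only [Set.mem_inter_iff, Set.mem_preimage, Set.mem_setOf_eq,
    Set.mem_vadd_set_iff_neg_vadd_mem, vadd_eq_add, neg_add_eq_sub]

private lemma groemer_key_int (G E : Set (EuclideanSpace ℝ (Fin n)))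
    (hG : MeasurableSet G) (hE : MeasurableSet E) :
    ∫⁻ x : EuclideanSpace ℝ (Fin n), volume ((x +ᵥ G) ∩ E) = volume G * volume E := by
  set s : Set (EuclideanSpace ℝ (Fin n) × EuclideanSpace ℝ (Fin n)) :=
    {p | p.2 - p.1 ∈ G ∧ p.2 ∈ E} with hs_def
  have hs : MeasurableSet s :=
    ((measurable_snd.sub measurable_fst) hG).inter (measurable_snd hE)
  have h1 : ∀ x, (x +ᵥ G) ∩ E = Prod.mk x ⁻¹' s := by
    intro x; ext y
    simp only [hs_def, Set.mem_inter_iff, Set.mem_preimage, Set.mem_setOf_eq,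
      Set.mem_vadd_set_iff_neg_vadd_mem, vadd_eq_add, neg_add_eq_sub]
  calc ∫⁻ x : EuclideanSpace ℝ (Fin n), volume ((x +ᵥ G) ∩ E)
      = (volume.prod volume) s := by
        rw [Measure.prod_apply hs]; simp_rw [h1]
    _ = ∫⁻ y, volume ((fun x => (x, y)) ⁻¹' s) := Measure.prod_apply_symm hs
    _ = ∫⁻ y, E.indicator (fun _ => volume G) y := by
        congr 1; ext y
        by_cases hy : y ∈ E
        · have h2 : (fun x => (x, y)) ⁻¹' s = (fun x => y - x) ⁻¹' G := by
            ext x; simp [hs_def, hy]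
          have h3 : (fun x : EuclideanSpace ℝ (Fin n) => y - x)
              = (fun x => y + x) ∘ Neg.neg := by
            ext x; simp [sub_eq_add_neg]
          rw [h2, h3, Set.preimage_comp, Measure.measure_preimage_neg, measure_preimage_add,
            Set.indicator_of_mem hy]
        · have h2 : (fun x => (x, y)) ⁻¹' s = ∅ := by
            ext x; simp [hs_def, hy]
          rw [h2, Set.indicator_of_notMem hy]; simp
    _ = volume G * volume E := by
        rw [lintegral_indicator hE, setLIntegral_const, mul_comm]

end aux

section aux2

variable {n : ℕ}

private lemma groemer_vol_cube
    (C : Set (EuclideanSpace ℝ (Fin n)))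
    (hC : C = WithLp.ofLp ⁻¹' (Set.pi Set.univ fun _ : Fin n => Set.Icc (-(1/2) : ℝ) (1/2))) :
    volume C = 1 := by
  rw [hC, (PiLp.volume_preserving_ofLp (Fin n)).measure_preimage
    (MeasurableSet.univ_pi fun _ => measurableSet_Icc).nullMeasurableSet, volume_pi_pi]
  simp [Real.volume_Icc]
  norm_num

end aux2

section aux3

variable {n : ℕ}

private lemma groemer_two_smul_mem
    (C : Set (EuclideanSpace ℝ (Fin n)))
    (hC : C = WithLp.ofLp ⁻¹' (Set.pi Set.univ fun _ : Fin n => Set.Icc (-(1/2) : ℝ) (1/2)))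
    (x : EuclideanSpace ℝ (Fin n)) (hx : ∀ i, x i ∈ Set.Icc (-1 : ℝ) 1) :
    x ∈ (2 : ℝ) • C := by
  rw [Set.mem_smul_set_iff_inv_smul_mem₀ (two_ne_zero) C x, hC]
  intro i _
  have h := hx i
  simp only [Set.mem_Icc] at h ⊢
  rw [PiLp.smul_apply, smul_eq_mul]
  constructor <;> nlinarith [h.1, h.2]

private lemma groemer_vol_two_smul
    (C : Set (EuclideanSpace ℝ (Fin n)))
    (hC : C = WithLp.ofLp ⁻¹' (Set.pi Set.univ fun _ : Fin n => Set.Icc (-(1/2) : ℝ) (1/2))) :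
    volume ((2 : ℝ) • C) = 2 ^ n := by
  rw [Measure.addHaar_smul volume, groemer_vol_cube C hC, finrank_euclideanSpace_fin, mul_one,
    abs_pow, abs_of_nonneg (by norm_num : (0:ℝ) ≤ 2), ENNReal.ofReal_pow (by norm_num)]
  norm_num

end aux3

section aux4

variable {n : ℕ}

private lemma groemer_avg
    (C : Set (EuclideanSpace ℝ (Fin n)))
    (hC : C = WithLp.ofLp ⁻¹' (Set.pi Set.univ fun _ : Fin n => Set.Icc (-(1/2) : ℝ) (1/2)))
    (E G : Set (EuclideanSpace ℝ (Fin n))) (hE : MeasurableSet E) (hG : MeasurableSet G)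
    (hEC : E ⊆ C) (hGC : G ⊆ C) :
    ∃ x ∈ (2 : ℝ) • C,
      ((2 : ENNReal) ^ n)⁻¹ * volume G * volume E ≤ volume ((x +ᵥ G) ∩ E) := by
  have hCm : MeasurableSet C := by
    rw [hC]; exact (MeasurableSet.univ_pi fun _ => measurableSet_Icc).preimage (PiLp.volume_preserving_ofLp (Fin n)).measurable
  have h0mem : (0 : EuclideanSpace ℝ (Fin n)) ∈ (2 : ℝ) • C := by
    apply groemer_two_smul_mem C hC
    intro i
    simp
  by_cases hz : volume G = 0 ∨ volume E = 0
  · refine ⟨0, h0mem, ?_⟩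
    rcases hz with h | h <;> simp [h]
  push_neg at hz
  by_contra hcon
  push_neg at hcon
  set c := ((2 : ENNReal) ^ n)⁻¹ * volume G * volume E with hc
  set f := fun x : EuclideanSpace ℝ (Fin n) => volume ((x +ᵥ G) ∩ E) with hf
  have hfm := groemer_key_meas G E hG hE
  have hsupp : ∀ x, x ∉ (2:ℝ) • C → f x = 0 := by
    intro x hx
    have hemp : (x +ᵥ G) ∩ E = ∅ := by
      rw [Set.eq_empty_iff_forall_notMem]
      rintro y ⟨hy1, hy2⟩
      apply hx
      rw [Set.mem_vadd_set_iff_neg_vadd_mem] at hy1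
      apply groemer_two_smul_mem C hC
      intro i
      have hyc := hEC hy2; have hgc := hGC hy1
      rw [hC] at hyc hgc
      have h1 := hyc i (Set.mem_univ i); have h2 := hgc i (Set.mem_univ i)
      simp only [Set.mem_Icc, vadd_eq_add] at h1 h2 ⊢
      have hxi : x i = y i - (-x + y) i := by
        simp only [PiLp.add_apply, PiLp.neg_apply]; ring
      rw [hxi]
      constructor <;> linarith [h1.1, h1.2, h2.1, h2.2]
    simp only [hf, hemp, measure_empty]
  have h2Cm : MeasurableSet ((2:ℝ) • C) :=
    hCm.const_smul_of_ne_zero (two_ne_zero)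
  have hint : ∫⁻ x in (2:ℝ) • C, f x = volume G * volume E := by
    rw [← groemer_key_int G E hG hE, ← lintegral_indicator h2Cm]
    congr 1
    funext x
    by_cases hx : x ∈ (2:ℝ) • C
    · rw [Set.indicator_of_mem hx]
    · rw [Set.indicator_of_notMem hx]
      exact (hsupp x hx).symm
  have hGfin : volume G ≠ ⊤ := by
    refine ne_top_of_le_ne_top ?_ (measure_mono hGC)
    rw [groemer_vol_cube C hC]; exact ENNReal.one_ne_top
  have hEfin : volume E ≠ ⊤ := by
    refine ne_top_of_le_ne_top ?_ (measure_mono hEC)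
    rw [groemer_vol_cube C hC]; exact ENNReal.one_ne_top
  have h2n0 : ((2:ENNReal) ^ n) ≠ 0 := by positivity
  have h2nt : ((2:ENNReal) ^ n) ≠ ⊤ := by
    exact ENNReal.pow_ne_top (by norm_num)
  have hvol2C : volume ((2:ℝ) • C) ≠ 0 := by
    rw [groemer_vol_two_smul C hC]; exact h2n0
  have hlt : ∫⁻ x in (2:ℝ) • C, f x < ∫⁻ _ in (2:ℝ) • C, c := by
    refine setLIntegral_strict_mono h2Cm hvol2C measurable_const ?_ ?_
    · rw [hint]; exact ENNReal.mul_ne_top hGfin hEfin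
    · exact Filter.Eventually.of_forall fun x hx => hcon x hx
  rw [hint, setLIntegral_const, groemer_vol_two_smul C hC] at hlt
  have heq : c * 2 ^ n = volume G * volume E := by
    have : c * 2 ^ n = ((2:ENNReal)^n)⁻¹ * (2:ENNReal)^n * (volume G * volume E) := by
      rw [hc]; ring
    rw [this, ENNReal.inv_mul_cancel h2n0 h2nt, one_mul]
  rw [heq] at hlt
  exact lt_irrefl _ hlt

end aux4

theorem groemer_cover_ae {n : ℕ}
    (C : Set (EuclideanSpace ℝ (Fin n)))
    (hC : C = WithLp.ofLp ⁻¹' (Set.pi Set.univ fun _ : Fin n => Set.Icc (-(1/2) : ℝ) (1/2)))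
    (F : ℕ → Set (EuclideanSpace ℝ (Fin n)))
    (hFm : ∀ k, MeasurableSet (F k)) (hFC : ∀ k, F k ⊆ C)
    (htot : ∑' k, volume (F k) = ⊤) :
    (∃ x : ℕ → EuclideanSpace ℝ (Fin n),
        volume (C \ ⋃ k, (x k +ᵥ F k)) = 0) ∧
    (∀ E G : Set (EuclideanSpace ℝ (Fin n)), MeasurableSet E → MeasurableSet G →
      E ⊆ C → G ⊆ C →
      ∃ x ∈ (2 : ℝ) • C,
        ((2 : ENNReal) ^ n)⁻¹ * volume G * volume E ≤ volume ((x +ᵥ G) ∩ E)) := by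
  refine ⟨?_, fun E G hE hG hEC hGC => groemer_avg C hC E G hE hG hEC hGC⟩
  have hCm : MeasurableSet C := by
    rw [hC]; exact (MeasurableSet.univ_pi fun _ => measurableSet_Icc).preimage (PiLp.volume_preserving_ofLp (Fin n)).measurable
  have h : ∀ (E' : Set (EuclideanSpace ℝ (Fin n))) (k : ℕ),
      ∃ x : EuclideanSpace ℝ (Fin n), MeasurableSet E' → E' ⊆ C →
        ((2 : ENNReal) ^ n)⁻¹ * volume (F k) * volume E' ≤ volume ((x +ᵥ F k) ∩ E') := by
    intro E' k
    by_cases h' : MeasurableSet E' ∧ E' ⊆ C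
    · obtain ⟨x, -, hx2⟩ := groemer_avg C hC E' (F k) h'.1 (hFm k) h'.2 (hFC k)
      exact ⟨x, fun _ _ => hx2⟩
    · exact ⟨0, fun h1 h2 => absurd ⟨h1, h2⟩ h'⟩
  choose xf hxf using h
  set Es : ℕ → Set (EuclideanSpace ℝ (Fin n)) :=
    fun k => Nat.rec C (fun k Ek => Ek \ (xf Ek k +ᵥ F k)) k with hEs
  set x : ℕ → EuclideanSpace ℝ (Fin n) := fun k => xf (Es k) k with hx
  have hEs0 : Es 0 = C := rfl
  have hEsS : ∀ k, Es (k + 1) = Es k \ (x k +ᵥ F k) := fun k => rfl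
  refine ⟨x, ?_⟩
  have hFkm : ∀ k, MeasurableSet (x k +ᵥ F k) := fun k => (hFm k).const_vadd (x k)
  have hEsm : ∀ k, MeasurableSet (Es k) ∧ Es k ⊆ C := by
    intro k; induction k with
    | zero => exact ⟨hCm, subset_rfl⟩
    | succ k ih =>
      rw [hEsS]
      exact ⟨ih.1.diff (hFkm k), Set.diff_subset.trans ih.2⟩
  have hsub : ∀ k, C \ (⋃ j, (x j +ᵥ F j)) ⊆ Es k := by
    intro k; induction k with
    | zero => exact Set.diff_subset
    | succ k ih =>
      intro y hy
      rw [hEsS]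
      exact ⟨ih hy, fun hmem => hy.2 (Set.mem_iUnion.2 ⟨k, hmem⟩)⟩
  by_contra hne
  have hCvol := groemer_vol_cube C hC
  set ε := volume (C \ ⋃ j, (x j +ᵥ F j)) with hεdef
  have hle : ∀ k, ε ≤ volume (Es k) := fun k => measure_mono (hsub k)
  have h2n0 : ((2:ENNReal) ^ n) ≠ 0 := by positivity
  have h2nt : ((2:ENNReal) ^ n) ≠ ⊤ := ENNReal.pow_ne_top (by norm_num)
  have hstep : ∀ k,
      volume (Es (k+1)) + ((2 : ENNReal) ^ n)⁻¹ * volume (F k) * ε ≤ volume (Es k) := by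
    intro k
    have h1 := hxf (Es k) k (hEsm k).1 (hEsm k).2
    have h2 : volume (Es (k+1)) + volume ((x k +ᵥ F k) ∩ Es k) = volume (Es k) := by
      rw [hEsS, Set.inter_comm]
      exact measure_diff_add_inter (Es k) (hFkm k)
    calc volume (Es (k+1)) + ((2:ENNReal)^n)⁻¹ * volume (F k) * ε
        ≤ volume (Es (k+1)) + volume ((x k +ᵥ F k) ∩ Es k) := by
          refine add_le_add_right (le_trans ?_ h1) _
          exact mul_le_mul_right (hle k) _
      _ = volume (Es k) := h2
  have hsum : ∀ N, volume (Es N) +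
      ∑ k ∈ Finset.range N, ((2:ENNReal)^n)⁻¹ * volume (F k) * ε ≤ volume (Es 0) := by
    intro N; induction N with
    | zero => simp
    | succ N ih =>
      rw [Finset.sum_range_succ]
      calc volume (Es (N+1)) + (∑ k ∈ Finset.range N, ((2:ENNReal)^n)⁻¹ * volume (F k) * ε
              + ((2:ENNReal)^n)⁻¹ * volume (F N) * ε)
          = (volume (Es (N+1)) + ((2:ENNReal)^n)⁻¹ * volume (F N) * ε)
              + ∑ k ∈ Finset.range N, ((2:ENNReal)^n)⁻¹ * volume (F k) * ε := by ring
        _ ≤ volume (Es N) + ∑ k ∈ Finset.range N, ((2:ENNReal)^n)⁻¹ * volume (F k) * ε :=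
            add_le_add_left (hstep N) _
        _ ≤ volume (Es 0) := ih
  have hS : ∀ N, ∑ k ∈ Finset.range N, ((2:ENNReal)^n)⁻¹ * volume (F k) * ε ≤ 1 := by
    intro N
    refine le_trans le_add_self (le_trans (hsum N) ?_)
    rw [hEs0, hCvol]
  have htsum : ∑' k, ((2:ENNReal)^n)⁻¹ * volume (F k) * ε ≤ 1 :=
    Summable.tsum_le_of_sum_range_le ENNReal.summable hS
  have hrw : ∀ k, ((2:ENNReal)^n)⁻¹ * volume (F k) * ε
      = (((2:ENNReal)^n)⁻¹ * ε) * volume (F k) := by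
    intro k; ring
  rw [funext hrw] at htsum
  rw [ENNReal.tsum_mul_left, htot, ENNReal.mul_top
    (mul_ne_zero (ENNReal.inv_ne_zero.2 h2nt) hne)] at htsum
  exact absurd htsum (by simp)
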